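/- Let τ = (1 + √5)/2 be the golden ratio, c_τ = (1 + τ²)/τ³, and for n ∈ ℕ define b_n = c_τ n − 1/τ⁴ + (1/τ²)·frac((n+1)/τ²), where frac(x) denotes the fractional part of x. Then the sequence (b_n) of nonnegative τ-integers is quasiperiodic with exactly two possible adjacent gaps: for every n ∈ ℕ, b_{n+1} − b_n ∈ {1, 1/τ}. -/

import Mathlib

/-- The golden ratio `τ = (1 + √5)/2`. -/
noncomputable def τ : ℝ := (1 + Real.sqrt 5) / 2

/-- The constant `c_τ = (1 + τ²)/τ³`. -/
noncomputable def cτ : ℝ := (1 + τ ^ 2) / τ ^ 3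

/-- The nonnegative τ-integers
`bₙ = c_τ n − 1/τ⁴ + (1/τ²)·frac((n+1)/τ²)`. -/
noncomputable def bseq (n : ℕ) : ℝ :=
  cτ * n - 1 / τ ^ 4 + (1 / τ ^ 2) * Int.fract ((n + 1) / τ ^ 2)

lemma tau_sq : τ ^ 2 = τ + 1 := by
  have h5 : Real.sqrt 5 ^ 2 = 5 := Real.sq_sqrt (by norm_num)
  unfold τ; nlinarith [h5]

lemma tau_gt_one : 1 < τ := by
  have h5 : 1 < Real.sqrt 5 := by
    have := Real.lt_sqrt (x := 1) (y := 5) (by norm_num)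
    simpa using this.mpr (by norm_num)
  unfold τ; linarith

lemma tau_pos : 0 < τ := lt_trans one_pos tau_gt_one

lemma tau_ne : τ ≠ 0 := ne_of_gt tau_pos

lemma inv_sq_mem : 0 < 1 / τ ^ 2 ∧ 1 / τ ^ 2 < 1 := by
  have h1 : (1:ℝ) < τ ^ 2 := by nlinarith [tau_gt_one]
  constructor
  · positivity
  · rw [div_lt_one (by positivity)]; exact h1

/-- the sequence of nonnegative τ-integers is quasiperiodic with
exactly two possible adjacent gaps: for every `n`,
`b_{n+1} − bₙ ∈ {1, 1/τ}`. -/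
theorem stmt_18 :
    ∀ n : ℕ, bseq (n + 1) - bseq n = 1 ∨ bseq (n + 1) - bseq n = 1 / τ := by
  intro n
  set a : ℝ := ((n : ℝ) + 1) / τ ^ 2 with ha
  have hstep : ((n : ℝ) + 1 + 1) / τ ^ 2 = a + 1 / τ ^ 2 := by
    rw [ha]; ring
  have hlow : ⌊a⌋ ≤ ⌊a + 1 / τ ^ 2⌋ :=
    Int.floor_le_floor (by linarith [inv_sq_mem.1])
  have hhigh : ⌊a + 1 / τ ^ 2⌋ ≤ ⌊a⌋ + 1 := by
    have : ⌊a + 1 / τ ^ 2⌋ ≤ ⌊a + 1⌋ := Int.floor_le_floor (by linarith [inv_sq_mem.2])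
    simpa [Int.floor_add_one] using this
  have hfr : ∀ x : ℝ, Int.fract x = x - ⌊x⌋ := fun x => rfl
  have hdiff : bseq (n + 1) - bseq n
      = cτ + 1 / τ ^ 4 - (1 / τ ^ 2) * ((⌊a + 1 / τ ^ 2⌋ : ℝ) - (⌊a⌋ : ℝ)) := by
    unfold bseq
    push_cast
    rw [hstep, hfr, hfr]
    ring
  have hcase : ⌊a + 1 / τ ^ 2⌋ = ⌊a⌋ ∨ ⌊a + 1 / τ ^ 2⌋ = ⌊a⌋ + 1 := by omega
  have hne := tau_ne
  have ht := tau_sq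
  rcases hcase with h | h
  · left
    rw [hdiff, h]
    unfold cτ
    field_simp
    linear_combination (-(τ^2 + 1)) * ht
  · right
    rw [hdiff, h]
    unfold cτ
    push_cast
    field_simp
    linear_combination (-1) * ht
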